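/- (Corollary 1, discrete time.) Let S ⊂ ℝⁿ be compact and convex, A ⊂ ℝᵐ be compact and convex, f : ℝⁿ × ℝᵐ → ℝⁿ, C ∈ ℝ^{1×n}, d ∈ ℝ, r > 0, δt > 0, and let B := {s ∈ S : C s ∈ [d − r, d]} be the convex hull of a finite vertex set V ⊂ ℝⁿ. Let μ : S → A be affine on B (μ(s) = D s + e on B for some D ∈ ℝ^{m×n}, e ∈ ℝᵐ), and let ε ≥ 0 be an approximation measure with witnesses A₀, B₀, c₀, i.e. |C f(s, a) − C(A₀ s + B₀ a + c₀)| ≤ ε for all s ∈ B, a ∈ A. Assume: (i) the discrete repulsion condition C((v + f(v, μ(v)) δt) − v) ≤ −2ε δt holds for every v ∈ V; and (ii) the buffer is wide enough: C((s + f(s, μ(s)) δt) − s) ≤ r for every s ∈ S with C s < d. Then every sequence (s_j)_{j ∈ ℕ} with s₀ ∈ S, C s₀ < d, and s_{j+1} = s_j + f(s_j, μ(s_j)) δt ∈ S for all j, satisfies C s_j < d for all j ∈ ℕ. -/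

import Mathlib

open Matrix

/-- **Corollary 1 (discrete time).** Let `S ⊆ ℝⁿ` be compact convex, `A ⊆ ℝᵐ` compact
convex, `B := {s ∈ S : C s ∈ [d - r, d]}` the buffer, given as the convex hull of a finite
vertex set `V`. Let `μ : S → A` be affine on `B` and let `ε ≥ 0` be an approximation
measure with witnesses `A₀, B₀, c₀`. Assume the discrete repulsion condition
`C ((v + f(v, μ(v)) δt) - v) ≤ -2 ε δt` at every vertex `v ∈ V`, and that the buffer is
wide enough: `C ((s + f(s, μ(s)) δt) - s) ≤ r` for every safe `s ∈ S` (i.e. `C s < d`).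
Then every discrete closed-loop trajectory remaining in `S` and starting with
`C s₀ < d` satisfies `C s_j < d` for all `j`. -/
theorem policed_rl_safety_discrete {n m : ℕ}
    (S : Set (Fin n → ℝ)) (hScomp : IsCompact S) (hSconv : Convex ℝ S)
    (A : Set (Fin m → ℝ)) (hAcomp : IsCompact A) (hAconv : Convex ℝ A)
    (f : (Fin n → ℝ) → (Fin m → ℝ) → (Fin n → ℝ))
    (C : Fin n → ℝ) (d r : ℝ) (hr : 0 < r) (δt : ℝ) (hδt : 0 < δt)
    (B : Set (Fin n → ℝ)) (hBdef : B = {s ∈ S | C ⬝ᵥ s ∈ Set.Icc (d - r) d})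
    (V : Finset (Fin n → ℝ)) (hBhull : B = convexHull ℝ (V : Set (Fin n → ℝ)))
    (μ : (Fin n → ℝ) → (Fin m → ℝ)) (hμadm : ∀ s ∈ S, μ s ∈ A)
    (D : Matrix (Fin m) (Fin n) ℝ) (e : Fin m → ℝ)
    (hμaff : ∀ s ∈ B, μ s = D *ᵥ s + e)
    (ε : ℝ) (hε : 0 ≤ ε)
    (A₀ : Matrix (Fin n) (Fin n) ℝ) (B₀ : Matrix (Fin n) (Fin m) ℝ) (c₀ : Fin n → ℝ)
    (happrox : ∀ s ∈ B, ∀ a ∈ A, |C ⬝ᵥ f s a - C ⬝ᵥ (A₀ *ᵥ s + B₀ *ᵥ a + c₀)| ≤ ε)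
    (hrep : ∀ v ∈ V, C ⬝ᵥ ((v + δt • f v (μ v)) - v) ≤ -(2 * ε * δt))
    (hwide : ∀ s ∈ S, C ⬝ᵥ s < d → C ⬝ᵥ ((s + δt • f s (μ s)) - s) ≤ r) :
    ∀ s : ℕ → (Fin n → ℝ),
      s 0 ∈ S → C ⬝ᵥ s 0 < d →
      (∀ j : ℕ, s (j + 1) = s j + δt • f (s j) (μ (s j)) ∧ s (j + 1) ∈ S) →
      ∀ j : ℕ, C ⬝ᵥ s j < d := by

  intro s hs0 hsafe0 hstep
  set M : Matrix (Fin n) (Fin n) ℝ := A₀ + B₀ * D with hM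
  set k : ℝ := C ⬝ᵥ (B₀ *ᵥ e + c₀) with hk
  have hlin : IsLinearMap ℝ (fun x : Fin n → ℝ => C ⬝ᵥ (M *ᵥ x)) := by
    constructor
    · intro x y; rw [Matrix.mulVec_add, dotProduct_add]
    · intro c x; rw [Matrix.mulVec_smul, dotProduct_smul, smul_eq_mul]
  have haffval : ∀ x : Fin n → ℝ, C ⬝ᵥ (A₀ *ᵥ x + B₀ *ᵥ (D *ᵥ x + e) + c₀)
      = C ⬝ᵥ (M *ᵥ x) + k := by
    intro x
    simp only [hM, hk, Matrix.mulVec_add, Matrix.add_mulVec, ← Matrix.mulVec_mulVec,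
      dotProduct_add]
    ring
  have hVsubB : (V : Set (Fin n → ℝ)) ⊆ B := by
    rw [hBhull]; exact subset_convexHull ℝ _
  have hstepeq : ∀ (x : Fin n → ℝ) (y : Fin m → ℝ),
      C ⬝ᵥ ((x + δt • f x y) - x) = δt * (C ⬝ᵥ f x y) := by
    intro x y
    rw [add_sub_cancel_left, dotProduct_smul, smul_eq_mul]
  have hkey : ∀ x ∈ B, C ⬝ᵥ ((x + δt • f x (μ x)) - x) ≤ 0 := by
    intro x hxB
    have hxS : x ∈ S := by rw [hBdef] at hxB; exact hxB.1
    have hμx : μ x ∈ A := hμadm x hxS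
    have happ := happrox x hxB (μ x) hμx
    rw [hμaff x hxB] at happ
    rw [haffval x] at happ
    have hgx : C ⬝ᵥ (M *ᵥ x) + k ≤ -ε := by
      have hconv : Convex ℝ {y : Fin n → ℝ | C ⬝ᵥ (M *ᵥ y) + k ≤ -ε} := by
        have h2 := convex_halfSpace_le hlin (-ε - k)
        have heq : {y : Fin n → ℝ | C ⬝ᵥ (M *ᵥ y) + k ≤ -ε}
            = {w : Fin n → ℝ | C ⬝ᵥ (M *ᵥ w) ≤ -ε - k} :=
          Set.ext fun y => ⟨fun h => by simp only [Set.mem_setOf_eq] at h ⊢; linarith,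
            fun h => by simp only [Set.mem_setOf_eq] at h ⊢; linarith⟩
        rw [heq]; exact h2
      have hVin : (V : Set (Fin n → ℝ)) ⊆ {y : Fin n → ℝ | C ⬝ᵥ (M *ᵥ y) + k ≤ -ε} := by
        intro v hv
        have hvB : v ∈ B := hVsubB hv
        have hvS : v ∈ S := by rw [hBdef] at hvB; exact hvB.1
        have happv := happrox v hvB (μ v) (hμadm v hvS)
        have hrepv := hrep v hv
        rw [hstepeq v (μ v), hμaff v hvB] at hrepv
        have hCf : C ⬝ᵥ f v (D *ᵥ v + e) ≤ -(2 * ε) := by nlinarith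
        rw [hμaff v hvB, haffval v] at happv
        have habs := abs_le.mp happv
        simp only [Set.mem_setOf_eq]
        linarith [habs.1, habs.2]
      have hxhull : x ∈ convexHull ℝ (V : Set (Fin n → ℝ)) := by
        rw [← hBhull]; exact hxB
      exact convexHull_min hVin hconv hxhull
    have habs := abs_le.mp happ
    rw [hstepeq x (μ x), hμaff x hxB]
    nlinarith [habs.1, habs.2]
  intro j
  induction j with
  | zero => exact hsafe0
  | succ j ih =>
    have hjS : s j ∈ S := by
      cases j with
      | zero => exact hs0
      | succ i => exact (hstep i).2
    have hstepj := (hstep j).1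
    have hdot : C ⬝ᵥ s (j + 1) = C ⬝ᵥ s j + C ⬝ᵥ ((s j + δt • f (s j) (μ (s j))) - s j) := by
      rw [hstepj, dotProduct_sub]; ring
    by_cases hB : s j ∈ B
    · have := hkey (s j) hB
      rw [hdot]; linarith
    · have hlow : C ⬝ᵥ s j < d - r := by
        rw [hBdef] at hB
        simp only [Set.mem_setOf_eq, Set.mem_Icc, not_and, not_le] at hB
        by_contra h
        push_neg at h
        exact absurd ih (not_lt.mpr (le_of_lt (hB hjS h)))
      have := hwide (s j) hjS ih
      rw [hdot]; linarith
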